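/- Let F be a distribution function in the class L_{β,γ}. Then F is light-tailed (i.e. there exists λ > 0 with ∫_0^∞ e^{λx} dF(x) < ∞) if and only if β ≤ 0. -/

import Mathlib

open Filter MeasureTheory Real Topology

/-- A function `ℓ` is slowly varying if `ℓ(λ x)/ℓ(x) → 1` as `x → ∞` for every `λ > 0`. -/
def SlowlyVarying (ℓ : ℝ → ℝ) : Prop :=
  ∀ lam : ℝ, 0 < lam → Tendsto (fun x => ℓ (lam * x) / ℓ x) atTop (nhds 1)

/-- Membership of a (tail of a) distribution function `F` in the class `L_{β,γ}`. -/
def MemClassL (β : ℝ) (γ : EReal) (F : ℝ → ℝ) : Prop :=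
  ∃ (x₀ C : ℝ) (ℓ : ℝ → ℝ),
    0 ≤ x₀ ∧ 0 < C ∧ Measurable ℓ ∧ (∀ᶠ t in atTop, 0 < ℓ t) ∧
    SlowlyVarying ℓ ∧
    Tendsto (fun t => (ℓ t : EReal)) atTop (nhds γ) ∧
    Tendsto (fun x => (1 - F x) * Real.exp (∫ t in x₀..x, ℓ t * t ^ (-β)))
      atTop (nhds C)

lemma aux_integrable (f F : ℝ → ℝ) (x₀ C : ℝ) (hC : 0 < C)
    (htail0 : Tendsto (fun x => 1 - F x) atTop (nhds 0))
    (htend : Tendsto (fun x => (1 - F x) * Real.exp (∫ t in x₀..x, f t)) atTop (nhds C)) :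
    ∀ x, x₀ ≤ x → IntervalIntegrable f volume x₀ x := by
  by_contra h
  push_neg at h
  obtain ⟨z, hz, hni⟩ := h
  have h0 : Tendsto (fun x => (1 - F x) * Real.exp (∫ t in x₀..x, f t)) atTop (nhds 0) := by
    apply htail0.congr'
    filter_upwards [eventually_ge_atTop z] with y hy
    have hz0 : (∫ t in x₀..y, f t) = 0 := by
      apply intervalIntegral.integral_undef
      intro hInt
      refine hni (hInt.mono_set ?_)
      rw [Set.uIcc_of_le hz, Set.uIcc_of_le (hz.trans hy)]
      exact Set.Icc_subset_Icc_right hy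
    rw [hz0, Real.exp_zero, mul_one]
  exact absurd (tendsto_nhds_unique htend h0) (by linarith)

lemma aux_light (μ : Measure ℝ) [IsProbabilityMeasure μ] (c M x₂ : ℝ) (hc : 0 < c) (hM : 0 < M)
    (hbound : ∀ x, x₂ ≤ x → μ (Set.Ioi x) ≤ ENNReal.ofReal (M * Real.exp (-(c * x)))) :
    ∫⁻ x, ENNReal.ofReal (Real.exp ((c/2) * x)) ∂μ < ⊤ := by
  have hl : 0 < c/2 := by linarith
  have hsplit : ∫⁻ x, ENNReal.ofReal (Real.exp ((c/2) * x)) ∂μ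
      = (∫⁻ x in Set.Iic x₂, ENNReal.ofReal (Real.exp ((c/2) * x)) ∂μ)
        + ∫⁻ x in Set.Ioi x₂, ENNReal.ofReal (Real.exp ((c/2) * x)) ∂μ := by
    have h := (lintegral_add_compl (μ := μ)
      (fun x => ENNReal.ofReal (Real.exp ((c/2) * x))) (measurableSet_Iic (a := x₂))).symm
    simpa [Set.compl_Iic] using h
  rw [hsplit]
  have part1 : (∫⁻ x in Set.Iic x₂, ENNReal.ofReal (Real.exp ((c/2) * x)) ∂μ)
      ≤ ENNReal.ofReal (Real.exp ((c/2) * x₂)) := by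
    calc (∫⁻ x in Set.Iic x₂, ENNReal.ofReal (Real.exp ((c/2) * x)) ∂μ)
        ≤ ∫⁻ _ in Set.Iic x₂, ENNReal.ofReal (Real.exp ((c/2) * x₂)) ∂μ := by
          refine setLIntegral_mono measurable_const fun x hx => ?_
          exact ENNReal.ofReal_le_ofReal (Real.exp_le_exp.2
            (mul_le_mul_of_nonneg_left hx hl.le))
      _ = ENNReal.ofReal (Real.exp ((c/2) * x₂)) * μ (Set.Iic x₂) := setLIntegral_const _ _
      _ ≤ ENNReal.ofReal (Real.exp ((c/2) * x₂)) * 1 := by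
          exact mul_le_mul_right prob_le_one _
      _ = _ := mul_one _
  have hsub : Set.Ioi x₂ ⊆ ⋃ n : ℕ, Set.Ioc (x₂ + n) (x₂ + n + 1) := by
    intro x hx
    simp only [Set.mem_Ioi] at hx
    have hy : (0:ℝ) < x - x₂ := by linarith
    have hc1 : 1 ≤ ⌈x - x₂⌉₊ := Nat.one_le_ceil_iff.2 hy
    refine Set.mem_iUnion.2 ⟨⌈x - x₂⌉₊ - 1, ?_⟩
    have hcast : ((⌈x - x₂⌉₊ - 1 : ℕ) : ℝ) = (⌈x - x₂⌉₊ : ℝ) - 1 := by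
      push_cast [Nat.cast_sub hc1]; ring
    constructor
    · have : ((⌈x - x₂⌉₊ - 1 : ℕ) : ℝ) < x - x₂ := by
        rw [hcast]
        have := Nat.lt_ceil (n := ⌈x - x₂⌉₊ - 1) (a := x - x₂) |>.1
          (by omega)
        rw [hcast] at this; linarith [this]
      linarith [this]
    · have h2 := Nat.le_ceil (x - x₂)
      rw [hcast]; linarith [h2]
  have term_bound : ∀ n : ℕ,
      (∫⁻ x in Set.Ioc (x₂ + n) (x₂ + n + 1), ENNReal.ofReal (Real.exp ((c/2) * x)) ∂μ)
      ≤ ENNReal.ofReal (M * Real.exp ((c/2)*(x₂+1) - c*x₂)) * (ENNReal.ofReal (Real.exp (-(c/2))))^n := by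
    intro n
    have h1 : (∫⁻ x in Set.Ioc (x₂ + n) (x₂ + n + 1), ENNReal.ofReal (Real.exp ((c/2) * x)) ∂μ)
        ≤ ENNReal.ofReal (Real.exp ((c/2) * (x₂ + n + 1))) * μ (Set.Ioc (x₂ + n) (x₂ + n + 1)) := by
      calc (∫⁻ x in Set.Ioc (x₂ + n) (x₂ + n + 1), ENNReal.ofReal (Real.exp ((c/2) * x)) ∂μ)
          ≤ ∫⁻ _ in Set.Ioc (x₂ + n) (x₂ + n + 1),
              ENNReal.ofReal (Real.exp ((c/2) * (x₂ + n + 1))) ∂μ := by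
            refine setLIntegral_mono measurable_const fun x hx => ?_
            exact ENNReal.ofReal_le_ofReal (Real.exp_le_exp.2
              (mul_le_mul_of_nonneg_left hx.2 hl.le))
        _ = _ := setLIntegral_const _ _
    have h2 : μ (Set.Ioc (x₂ + n) (x₂ + n + 1)) ≤ ENNReal.ofReal (M * Real.exp (-(c * (x₂ + n)))) := by
      refine le_trans (measure_mono Set.Ioc_subset_Ioi_self) (hbound _ ?_)
      have : (0:ℝ) ≤ n := Nat.cast_nonneg n
      linarith
    refine h1.trans ?_
    calc ENNReal.ofReal (Real.exp ((c/2) * (x₂ + n + 1))) * μ (Set.Ioc (x₂ + n) (x₂ + n + 1))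
        ≤ ENNReal.ofReal (Real.exp ((c/2) * (x₂ + n + 1)))
          * ENNReal.ofReal (M * Real.exp (-(c * (x₂ + n)))) := mul_le_mul_right h2 _
      _ = ENNReal.ofReal (Real.exp ((c/2) * (x₂ + n + 1)) * (M * Real.exp (-(c * (x₂ + n))))) :=
          (ENNReal.ofReal_mul (Real.exp_nonneg _)).symm
      _ = ENNReal.ofReal ((M * Real.exp ((c/2)*(x₂+1) - c*x₂)) * Real.exp (-(c/2)) ^ n) := by
          congr 1
          rw [← Real.exp_nat_mul,
            show Real.exp ((c/2) * (x₂ + ↑n + 1)) * (M * Real.exp (-(c * (x₂ + ↑n))))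
              = M * Real.exp ((c/2) * (x₂ + ↑n + 1) + -(c * (x₂ + ↑n))) by
                rw [Real.exp_add]; ring,
            show M * Real.exp ((c/2)*(x₂+1) - c*x₂) * Real.exp (↑n * -(c/2))
              = M * Real.exp (((c/2)*(x₂+1) - c*x₂) + ↑n * -(c/2)) by
                rw [Real.exp_add]; ring]
          congr 1
          ring
      _ = _ := by
          rw [ENNReal.ofReal_mul (by positivity), ENNReal.ofReal_pow (Real.exp_nonneg _)]
  have part2 : (∫⁻ x in Set.Ioi x₂, ENNReal.ofReal (Real.exp ((c/2) * x)) ∂μ) < ⊤ := by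
    have hq1 : ENNReal.ofReal (Real.exp (-(c/2))) < 1 := by
      rw [← ENNReal.ofReal_one]
      exact ENNReal.ofReal_lt_ofReal_iff_of_nonneg (Real.exp_nonneg _) |>.2
        (Real.exp_lt_one_iff.2 (by linarith))
    calc (∫⁻ x in Set.Ioi x₂, ENNReal.ofReal (Real.exp ((c/2) * x)) ∂μ)
        ≤ ∫⁻ x in ⋃ n : ℕ, Set.Ioc (x₂ + n) (x₂ + n + 1),
            ENNReal.ofReal (Real.exp ((c/2) * x)) ∂μ := lintegral_mono_set hsub
      _ ≤ ∑' n : ℕ, ∫⁻ x in Set.Ioc (x₂ + n) (x₂ + n + 1),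
            ENNReal.ofReal (Real.exp ((c/2) * x)) ∂μ := lintegral_iUnion_le _ _
      _ ≤ ∑' n : ℕ, ENNReal.ofReal (M * Real.exp ((c/2)*(x₂+1) - c*x₂))
            * (ENNReal.ofReal (Real.exp (-(c/2))))^n := ENNReal.tsum_le_tsum term_bound
      _ = ENNReal.ofReal (M * Real.exp ((c/2)*(x₂+1) - c*x₂))
            * ∑' n : ℕ, (ENNReal.ofReal (Real.exp (-(c/2))))^n := ENNReal.tsum_mul_left
      _ = ENNReal.ofReal (M * Real.exp ((c/2)*(x₂+1) - c*x₂))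
            * (1 - ENNReal.ofReal (Real.exp (-(c/2))))⁻¹ := by rw [ENNReal.tsum_geometric]
      _ < ⊤ := by
          apply ENNReal.mul_lt_top ENNReal.ofReal_lt_top
          rw [ENNReal.inv_lt_top]
          exact tsub_pos_of_lt hq1
  exact ENNReal.add_lt_top.2 ⟨lt_of_le_of_lt part1 ENNReal.ofReal_lt_top, part2⟩

set_option maxHeartbeats 2000000 in
theorem classL_lightTailed_iff
    (β : ℝ) (γ : EReal) (hβ1 : β ≤ 1) (hγ : 0 < γ)
    (μ : Measure ℝ) [IsProbabilityMeasure μ] (hsupp : μ (Set.Iio 0) = 0)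
    (F : ℝ → ℝ) (hFdef : ∀ x, F x = (μ (Set.Iic x)).toReal)
    (hlt : ∀ x, F x < 1)
    (hF : MemClassL β γ F) :
    (∃ lam : ℝ, 0 < lam ∧
        ∫⁻ x, ENNReal.ofReal (Real.exp (lam * x)) ∂μ < ⊤) ↔ β ≤ 0 := by
  obtain ⟨x₀, C, ℓ, hx₀, hC, hmeas, hpos, hsv, hγtend, htend⟩ := hF
  set f : ℝ → ℝ := fun t => ℓ t * t ^ (-β) with hfdef
  set I : ℝ → ℝ := fun x => ∫ t in x₀..x, f t with hIdef
  have htail : ∀ x, 1 - F x = (μ (Set.Ioi x)).toReal := by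
    intro x
    have h1 : μ (Set.Ioi x) = 1 - μ (Set.Iic x) := by
      rw [← Set.compl_Iic, measure_compl measurableSet_Iic (measure_ne_top μ _), measure_univ]
    rw [h1, hFdef x, ENNReal.toReal_sub_of_le prob_le_one ENNReal.one_ne_top, ENNReal.toReal_one]
  have htail_pos : ∀ x, 0 < 1 - F x := fun x => by linarith [hlt x]
  constructor
  · -- light-tailed → β ≤ 0
    rintro ⟨lam, hlam, hfin⟩
    by_contra hβ
    push_neg at hβ  -- 0 < β
    -- Markov bound
    set E : ENNReal := ∫⁻ x, ENNReal.ofReal (Real.exp (lam * x)) ∂μ with hEdef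
    set K : ℝ := E.toReal with hKdef
    have htailb : ∀ y : ℝ, 1 - F y ≤ K * Real.exp (-(lam * y)) := by
      intro y
      have hsubset : Set.Ioi y ⊆ {x | ENNReal.ofReal (Real.exp (lam * y))
          ≤ ENNReal.ofReal (Real.exp (lam * x))} := by
        intro x hx
        exact ENNReal.ofReal_le_ofReal (Real.exp_le_exp.2
          (mul_le_mul_of_nonneg_left (le_of_lt hx) hlam.le))
      have hmble : Measurable fun x : ℝ => ENNReal.ofReal (Real.exp (lam * x)) :=
        (Real.measurable_exp.comp (measurable_const.mul measurable_id)).ennreal_ofReal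
      have h1 : ENNReal.ofReal (Real.exp (lam * y)) * μ (Set.Ioi y) ≤ E :=
        le_trans (mul_le_mul_right (measure_mono hsubset) _) (mul_meas_ge_le_lintegral hmble _)
      have h2 : μ (Set.Ioi y) ≤ E / ENNReal.ofReal (Real.exp (lam * y)) := by
        rw [ENNReal.le_div_iff_mul_le (Or.inl (by simp [Real.exp_pos])) (Or.inl ENNReal.ofReal_ne_top)]
        rw [mul_comm]; exact h1
      have h3 : (μ (Set.Ioi y)).toReal ≤ K / Real.exp (lam * y) := by
        have h4 := ENNReal.toReal_mono (a := μ (Set.Ioi y))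
          (by exact (ENNReal.div_lt_top hfin.ne (by simp [Real.exp_pos])).ne) h2
        rwa [ENNReal.toReal_div, ENNReal.toReal_ofReal (Real.exp_nonneg _)] at h4
      rw [htail y, Real.exp_neg]
      rw [div_eq_mul_inv] at h3
      exact h3
    have htail0 : Tendsto (fun x => 1 - F x) atTop (nhds 0) := by
      have hub : Tendsto (fun y : ℝ => K * Real.exp (-(lam * y))) atTop (nhds 0) := by
        have h5 : Tendsto (fun y : ℝ => lam * y) atTop atTop :=
          Tendsto.const_mul_atTop hlam tendsto_id
        have h6 := Real.tendsto_exp_neg_atTop_nhds_zero.comp h5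
        have h7 := h6.const_mul K
        simpa [Function.comp_def] using h7
      refine squeeze_zero (fun x => (htail_pos x).le) (fun x => htailb x) hub
    have hInt : ∀ x, x₀ ≤ x → IntervalIntegrable f volume x₀ x :=
      aux_integrable f F x₀ C hC htail0 htend
    have hK : 0 < K := by
      have := htailb 0
      have h0 := htail_pos 0
      simp only [mul_zero, neg_zero, Real.exp_zero, mul_one] at this
      linarith
    -- lower bound on I
    have hIlow : ∀ᶠ x in atTop, Real.log (C / (2 * K)) + lam * x ≤ I x := by
      filter_upwards [htend.eventually_const_lt (half_lt_self hC)] with x hx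
      have hub := htailb x
      have hu : (0:ℝ) < Real.exp (lam * x) := Real.exp_pos _
      have hv : (0:ℝ) < Real.exp (I x) := Real.exp_pos _
      have h7 : C / 2 * Real.exp (lam * x) ≤ K * Real.exp (I x) := by
        have h8 : C / 2 ≤ K * Real.exp (-(lam * x)) * Real.exp (I x) := by
          have := mul_le_mul_of_nonneg_right hub hv.le
          exact le_trans hx.le this
        have h9 := mul_le_mul_of_nonneg_right h8 hu.le
        calc C / 2 * Real.exp (lam * x) ≤ K * Real.exp (-(lam * x)) * Real.exp (I x)
              * Real.exp (lam * x) := h9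
          _ = K * Real.exp (I x) * (Real.exp (-(lam * x)) * Real.exp (lam * x)) := by ring
          _ = K * Real.exp (I x) := by
              rw [← Real.exp_add, neg_add_cancel, Real.exp_zero, mul_one]
      have hkey : C / (2 * K) * Real.exp (lam * x) ≤ Real.exp (I x) := by
        rw [div_mul_eq_mul_div, div_le_iff₀ (by positivity : (0:ℝ) < 2 * K)]
        nlinarith [h7]
      have hlog := (Real.log_le_log_iff (by positivity) hv).2 hkey
      rwa [Real.log_mul (by positivity) hu.ne', Real.log_exp, Real.log_exp] at hlog
    obtain ⟨X₃, hX₃⟩ := eventually_atTop.1 hIlow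
    -- slow variation at 2
    set r : ℝ := (2:ℝ) ^ (β / 2) with hrdef
    have hr1 : 1 < r := by
      rw [hrdef]
      exact (Real.one_lt_rpow_iff_of_pos two_pos).2 (Or.inl ⟨one_lt_two, by linarith⟩)
    have hsv2 := (hsv 2 two_pos).eventually_lt_const hr1
    obtain ⟨a₁, ha₁⟩ := eventually_atTop.1 (hsv2.and hpos)
    -- thresholds
    set X₂ : ℝ := max (max x₀ 1) a₁ with hX₂def
    have hX₂x₀ : x₀ ≤ X₂ := le_trans (le_max_left _ _) (le_max_left _ _)
    have hX₂1 : (1:ℝ) ≤ X₂ := le_trans (le_max_right _ _) (le_max_left _ _)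
    have hX₂a : a₁ ≤ X₂ := le_max_right _ _
    have hX₂0 : (0:ℝ) < X₂ := lt_of_lt_of_le one_pos hX₂1
    have hℓpos : ∀ t, X₂ ≤ t → 0 < ℓ t := fun t ht => (ha₁ t (le_trans hX₂a ht)).2
    have hfpos : ∀ t, X₂ ≤ t → 0 ≤ f t := fun t ht =>
      mul_nonneg (hℓpos t ht).le (Real.rpow_nonneg (by linarith) _)
    have hℓ2 : ∀ u, X₂ ≤ u → ℓ (2 * u) ≤ r * ℓ u := by
      intro u hu
      have h10 := (ha₁ u (le_trans hX₂a hu)).1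
      have h11 := hℓpos u hu
      rw [div_lt_iff₀ h11] at h10
      linarith [h10]
    -- G and its properties
    set G : ℝ → ℝ := fun x => ∫ t in x..2*x, f t with hGdef
    have hIccInt : ∀ a b : ℝ, x₀ ≤ a → a ≤ b → IntervalIntegrable f volume a b := by
      intro a b ha hab
      refine (hInt b (ha.trans hab)).mono_set ?_
      rw [Set.uIcc_of_le hab, Set.uIcc_of_le (ha.trans hab)]
      exact Set.Icc_subset_Icc_left ha
    have hGdiff : ∀ y, x₀ ≤ y → 0 ≤ y → I (2 * y) = I y + G y := by
      intro y hy hy0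
      have h12 := intervalIntegral.integral_add_adjacent_intervals
        (hInt y hy) (hIccInt y (2*y) hy (by linarith))
      simp only [hIdef, hGdef]
      linarith [h12]
    have hGnonneg : ∀ x, X₂ ≤ x → 0 ≤ G x := by
      intro x hx
      refine intervalIntegral.integral_nonneg (by linarith) fun u hu => ?_
      exact hfpos u (le_trans hx hu.1)
    -- scaling inequality
    set ρ : ℝ := (2:ℝ) ^ (1 - β / 2) with hρdef
    have hρeq : ρ = 2 * (2:ℝ) ^ (-β) * r := by
      rw [hρdef, hrdef, show (1 - β/2 : ℝ) = 1 + -β + β/2 by ring,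
        Real.rpow_add two_pos, Real.rpow_add two_pos, Real.rpow_one]
    have hρ2 : ρ < 2 := by
      rw [hρdef]
      calc (2:ℝ) ^ (1 - β/2) < 2 ^ (1:ℝ) :=
            (Real.rpow_lt_rpow_left_iff one_lt_two).2 (by linarith)
        _ = 2 := Real.rpow_one 2
    have hρ1 : 1 < ρ := by
      rw [hρdef]
      calc (1:ℝ) = 2 ^ (0:ℝ) := (Real.rpow_zero 2).symm
        _ < 2 ^ (1 - β/2) := (Real.rpow_lt_rpow_left_iff one_lt_two).2 (by linarith)
    have hGscale : ∀ x, X₂ ≤ x → G (2 * x) ≤ ρ * G x := by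
      intro x hx
      have hx0 : (0:ℝ) < x := lt_of_lt_of_le hX₂0 hx
      have hint24 : IntervalIntegrable f volume (2*x) (2*(2*x)) :=
        hIccInt _ _ (by linarith [hX₂x₀]) (by linarith)
      have hcomp : IntervalIntegrable (fun u => f (2*u)) volume x (2*x) := by
        have h13 := hint24.comp_mul_left (c := 2)
        rw [show (2*x)/2 = x by ring, show (2*(2*x))/2 = 2*x by ring] at h13
        exact h13
      have hchange : G (2*x) = 2 * ∫ u in x..2*x, f (2*u) := by
        rw [hGdef]
        have h14 := intervalIntegral.integral_comp_mul_left (a := x) (b := 2*x)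
          (c := (2:ℝ)) (f := f) two_ne_zero
        rw [h14, smul_eq_mul]
        ring
      have hptwise : ∀ u ∈ Set.Icc x (2*x), f (2*u) ≤ (r * (2:ℝ)^(-β)) * f u := by
        intro u hu
        have hu2 : X₂ ≤ u := le_trans hx hu.1
        have hu0 : (0:ℝ) < u := lt_of_lt_of_le hX₂0 hu2
        have h15 : ((2:ℝ)*u) ^ (-β) = (2:ℝ)^(-β) * u^(-β) :=
          Real.mul_rpow (by norm_num) hu0.le
        have h16 : (0:ℝ) ≤ u ^ (-β) := Real.rpow_nonneg hu0.le _
        have h17 : (0:ℝ) ≤ (2:ℝ) ^ (-β) := Real.rpow_nonneg (by norm_num) _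
        calc f (2*u) = ℓ (2*u) * ((2:ℝ)*u) ^ (-β) := rfl
          _ ≤ (r * ℓ u) * ((2:ℝ)*u) ^ (-β) := by
              apply mul_le_mul_of_nonneg_right (hℓ2 u hu2)
              rw [h15]; positivity
          _ = (r * (2:ℝ)^(-β)) * (ℓ u * u ^ (-β)) := by rw [h15]; ring
          _ = (r * (2:ℝ)^(-β)) * f u := rfl
      have hmono : (∫ u in x..2*x, f (2*u)) ≤ ∫ u in x..2*x, (r * (2:ℝ)^(-β)) * f u :=
        intervalIntegral.integral_mono_on (by linarith) hcomp
          ((hIccInt x (2*x) (le_trans hX₂x₀ hx) (by linarith)).const_mul _) hptwise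
      have hconstmul : (∫ u in x..2*x, (r * (2:ℝ)^(-β)) * f u) = (r * (2:ℝ)^(-β)) * G x := by
        rw [hGdef, intervalIntegral.integral_const_mul]
      rw [hchange, hρeq]
      rw [hconstmul] at hmono
      nlinarith [hmono]
    -- iterate
    have hX₂pow : ∀ n : ℕ, X₂ ≤ 2^n * X₂ := by
      intro n
      nlinarith [one_le_pow₀ (one_le_two (α := ℝ)) (n := n), hX₂0]
    have hGn : ∀ n : ℕ, G (2^n * X₂) ≤ ρ^n * G X₂ := by
      intro n
      induction n with
      | zero => simp
      | succ n ih =>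
        have h18 : (2:ℝ)^(n+1) * X₂ = 2 * (2^n * X₂) := by ring
        rw [h18]
        calc G (2 * (2^n * X₂)) ≤ ρ * G (2^n * X₂) := hGscale _ (hX₂pow n)
          _ ≤ ρ * (ρ^n * G X₂) := by
              apply mul_le_mul_of_nonneg_left ih (by linarith)
          _ = ρ^(n+1) * G X₂ := by ring
    have hItel : ∀ N : ℕ, I (2^N * X₂) = I X₂ + ∑ n ∈ Finset.range N, G (2^n * X₂) := by
      intro N
      induction N with
      | zero => simp
      | succ N ih =>
        have h19 : (2:ℝ)^(N+1) * X₂ = 2 * (2^N * X₂) := by ring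
        rw [h19, hGdiff _ (le_trans hX₂x₀ (hX₂pow N)) (by nlinarith [hX₂pow N]), ih,
          Finset.sum_range_succ]
        ring
    -- upper bound on I(2^N X₂)
    have hIub : ∀ N : ℕ, I (2^N * X₂) ≤ I X₂ + G X₂ * (ρ^N / (ρ - 1)) := by
      intro N
      rw [hItel N]
      have h20 : ∑ n ∈ Finset.range N, G (2^n * X₂) ≤ ∑ n ∈ Finset.range N, ρ^n * G X₂ :=
        Finset.sum_le_sum fun n _ => hGn n
      have h21 : ∑ n ∈ Finset.range N, ρ^n * G X₂ = ((ρ^N - 1)/(ρ - 1)) * G X₂ := by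
        rw [← Finset.sum_mul, geom_sum_eq (ne_of_gt hρ1)]
      have h22 : ((ρ^N - 1)/(ρ - 1)) * G X₂ ≤ (ρ^N / (ρ - 1)) * G X₂ :=
        mul_le_mul_of_nonneg_right
          ((div_le_div_iff_of_pos_right (by linarith)).2 (by linarith)) (hGnonneg X₂ le_rfl)
      linarith [h20, h21, h22, mul_comm (G X₂) (ρ^N / (ρ - 1))]
    -- final contradiction
    set A : ℝ := I X₂ - Real.log (C / (2 * K)) with hAdef
    set D : ℝ := G X₂ / (ρ - 1) with hDdef
    have hfinal : ∀ᶠ N : ℕ in atTop, lam * X₂ ≤ A * (1/2)^N + D * (ρ/2)^N := by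
      have h2N : Tendsto (fun N : ℕ => (2:ℝ)^N * X₂) atTop atTop :=
        (tendsto_pow_atTop_atTop_of_one_lt one_lt_two).atTop_mul_const hX₂0
      filter_upwards [h2N.eventually_ge_atTop X₃] with N hN
      have hkey := hX₃ _ hN
      have hub := hIub N
      have h2Np : (0:ℝ) < 2^N := pow_pos two_pos N
      have hDeq : G X₂ * (ρ^N / (ρ - 1)) = D * ρ^N := by rw [hDdef]; ring
      have hmain : lam * X₂ * 2^N ≤ A + D * ρ^N := by
        have h25 : Real.log (C/(2*K)) + lam * (2^N * X₂) ≤ I X₂ + G X₂ * (ρ^N/(ρ-1)) :=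
          le_trans hkey hub
        have h26 : lam * (2^N * X₂) = lam * X₂ * 2^N := by ring
        rw [hAdef] at *
        linarith [h25, hDeq, h26]
      have h23 : lam * X₂ ≤ (A + D * ρ^N) / 2^N := (le_div_iff₀ h2Np).2 hmain
      have h24 : (A + D * ρ^N) / 2^N = A * (1/2)^N + D * (ρ/2)^N := by
        have h2N0 : ((2:ℝ)^N) ≠ 0 := (pow_pos two_pos N).ne'
        rw [div_pow, div_pow, one_pow]
        field_simp
      linarith [h23, h24]
    have hlim : Tendsto (fun N : ℕ => A * (1/2)^N + D * (ρ/2)^N) atTop (nhds 0) := by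
      have t1 := tendsto_pow_atTop_nhds_zero_of_lt_one
        (by norm_num : (0:ℝ) ≤ 1/2) (by norm_num : (1:ℝ)/2 < 1)
      have t2 := tendsto_pow_atTop_nhds_zero_of_lt_one
        (by linarith : (0:ℝ) ≤ ρ/2) (by linarith : ρ/2 < 1)
      have h27 := (t1.const_mul A).add (t2.const_mul D)
      simpa using h27
    have hle : lam * X₂ ≤ 0 := ge_of_tendsto hlim hfinal
    nlinarith [hlam, hX₂0]
  · -- β ≤ 0 → light-tailed
    intro hβ0
    obtain ⟨b, hb0E, hbγ⟩ := exists_between hγ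
    lift b to ℝ using ⟨hbγ.ne_top, ne_bot_of_gt hb0E⟩
    have hb0 : (0:ℝ) < b := by exact_mod_cast hb0E
    have hev : ∀ᶠ t in atTop, (b:ℝ) < ℓ t := by
      filter_upwards [hγtend.eventually_const_lt hbγ] with t ht
      exact_mod_cast ht
    obtain ⟨a₁, ha₁⟩ := eventually_atTop.1 (hev.and hpos)
    set x₁ : ℝ := max (max x₀ 1) a₁ with hx₁def
    have hx₁x₀ : x₀ ≤ x₁ := le_trans (le_max_left _ _) (le_max_left _ _)
    have hx₁1 : (1:ℝ) ≤ x₁ := le_trans (le_max_right _ _) (le_max_left _ _)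
    have hfb : ∀ t, x₁ ≤ t → b ≤ f t := by
      intro t ht
      have h1 := (ha₁ t (le_trans (le_max_right _ _) ht)).1
      have h2 : (1:ℝ) ≤ t ^ (-β) := Real.one_le_rpow (by linarith) (by linarith)
      have h3 : (0:ℝ) < ℓ t := (ha₁ t (le_trans (le_max_right _ _) ht)).2
      calc b ≤ ℓ t := h1.le
        _ ≤ ℓ t * t ^ (-β) := le_mul_of_one_le_right h3.le h2
        _ = f t := rfl
    have htail0 : Tendsto (fun x => 1 - F x) atTop (nhds 0) := by
      have h1 : Tendsto (fun x : ℝ => μ (Set.Iic x)) atTop (nhds 1) := by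
        simpa [measure_univ] using tendsto_measure_Iic_atTop (μ := μ)
      have h2 : Tendsto F atTop (nhds 1) := by
        have h3 := (ENNReal.tendsto_toReal ENNReal.one_ne_top).comp h1
        have h4 : Tendsto (fun x => (μ (Set.Iic x)).toReal) atTop (nhds 1) := by
          simpa [Function.comp_def] using h3
        exact h4.congr fun x => (hFdef x).symm
      have h5 := ((tendsto_const_nhds : Tendsto (fun _ : ℝ => (1:ℝ)) atTop (nhds 1)).sub h2)
      simpa using h5
    have hInt : ∀ x, x₀ ≤ x → IntervalIntegrable f volume x₀ x :=
      aux_integrable f F x₀ C hC htail0 htend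
    have hIccInt : ∀ a b : ℝ, x₀ ≤ a → a ≤ b → IntervalIntegrable f volume a b := by
      intro a b ha hab
      refine (hInt b (ha.trans hab)).mono_set ?_
      rw [Set.uIcc_of_le hab, Set.uIcc_of_le (ha.trans hab)]
      exact Set.Icc_subset_Icc_left ha
    have hIlb : ∀ x, x₁ ≤ x → I x₁ + b * (x - x₁) ≤ I x := by
      intro x hx
      have hadd := intervalIntegral.integral_add_adjacent_intervals
        (hInt x₁ hx₁x₀) (hIccInt x₁ x hx₁x₀ hx)
      have hconst : (∫ _ in x₁..x, b) ≤ ∫ t in x₁..x, f t :=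
        intervalIntegral.integral_mono_on hx intervalIntegrable_const (hIccInt x₁ x hx₁x₀ hx)
          (fun t ht => hfb t ht.1)
      rw [intervalIntegral.integral_const, smul_eq_mul] at hconst
      simp only [hIdef]
      have hb' : b * (x - x₁) = (x - x₁) * b := by ring
      linarith [hadd, hconst]
    obtain ⟨x₂', hx₂'⟩ := eventually_atTop.1
      (htend.eventually_lt_const (show C < C + 1 by linarith))
    set X : ℝ := max x₂' x₁ with hXdef
    set M : ℝ := (C+1) * Real.exp (b * x₁ - I x₁) with hMdef
    have hMpos : 0 < M := by positivity
    have hbound : ∀ x, X ≤ x → μ (Set.Ioi x) ≤ ENNReal.ofReal (M * Real.exp (-(b * x))) := by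
      intro x hx
      have h1 : (1 - F x) * Real.exp (I x) < C + 1 := hx₂' x (le_trans (le_max_left _ _) hx)
      have h2 := hIlb x (le_trans (le_max_right _ _) hx)
      have hEI : (0:ℝ) < Real.exp (I x) := Real.exp_pos _
      have h3 : 1 - F x ≤ (C+1) * (Real.exp (I x))⁻¹ := by
        calc 1 - F x = (1 - F x) * Real.exp (I x) * (Real.exp (I x))⁻¹ := by field_simp
          _ ≤ (C+1) * (Real.exp (I x))⁻¹ :=
              mul_le_mul_of_nonneg_right h1.le (by positivity)
      have h4 : (C+1) * (Real.exp (I x))⁻¹ ≤ M * Real.exp (-(b*x)) := by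
        rw [hMdef, ← Real.exp_neg]
        have h5 : -(I x) ≤ (b * x₁ - I x₁) + -(b*x) := by linarith [h2]
        calc (C+1) * Real.exp (-(I x)) ≤ (C+1) * Real.exp ((b*x₁ - I x₁) + -(b*x)) :=
              mul_le_mul_of_nonneg_left (Real.exp_le_exp.2 h5) (by linarith)
          _ = (C+1) * Real.exp (b*x₁ - I x₁) * Real.exp (-(b*x)) := by
              rw [Real.exp_add]; ring
      have h6 : (μ (Set.Ioi x)).toReal ≤ M * Real.exp (-(b*x)) := by
        rw [← htail x]; linarith [h3, h4]
      exact (ENNReal.le_ofReal_iff_toReal_le (measure_ne_top μ _) (by positivity)).2 h6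
    exact ⟨b/2, by linarith, aux_light μ b M X hb0 hMpos hbound⟩
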